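/- Let R be an integral domain, I a molecule of R, and J₁, ..., Jₙ pairwise comaximal ideals of R with J₁J₂⋯Jₙ ⊆ I. Then Jᵢ ⊆ I for some i. -/

import Mathlib

private lemma stmt_10_aux {R : Type*} [CommRing R] (I : Ideal R)
    (hproper : I ≠ ⊤)
    (hmol : ∀ A B : Ideal R, I = A * B → A = ⊤ ∨ B = ⊤) :
    ∀ n (J : Fin n → Ideal R), (∀ i j, i ≠ j → J i ⊔ J j = ⊤) →
      (∏ i, J i) ≤ I → ∃ i, J i ≤ I := by
  intro n
  induction n with
  | zero =>
    intro J _ hprod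
    simp at hprod
    exact absurd hprod hproper
  | succ n ih =>
    intro J hcomax hprod
    rw [Fin.prod_univ_succ] at hprod
    set P : Ideal R := ∏ i : Fin n, J i.succ with hP
    have hcop : J 0 ⊔ P = ⊤ := by
      apply Ideal.sup_prod_eq_top
      intro i _
      exact hcomax 0 i.succ (by simp [Fin.ext_iff])
    set A : Ideal R := I ⊔ J 0
    set B : Ideal R := I ⊔ P
    have hAB : I = A * B := by
      apply le_antisymm
      · have htop : A ⊔ B = ⊤ := by
          rw [eq_top_iff, ← hcop]
          exact sup_le (le_sup_of_le_left le_sup_right) (le_sup_of_le_right le_sup_right)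
        rw [Ideal.mul_eq_inf_of_coprime htop]
        exact le_inf le_sup_left le_sup_left
      · calc A * B = (I ⊔ J 0) * (I ⊔ P) := rfl
          _ = I * I ⊔ I * P ⊔ (J 0 * I ⊔ J 0 * P) := by
              rw [Ideal.sup_mul, Ideal.mul_sup, Ideal.mul_sup]
          _ ≤ I := by
              refine sup_le (sup_le ?_ ?_) (sup_le ?_ ?_)
              · exact Ideal.mul_le_right
              · exact Ideal.mul_le_left
              · exact Ideal.mul_le_right
              · exact hprod
    rcases hmol A B hAB with hA | hB
    · -- A = ⊤, so I = B, so P ≤ I; recurse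
      have hIB : I = B := by rw [hAB, hA, ← Ideal.one_eq_top, one_mul]
      have hPle : P ≤ I := by rw [hIB]; exact le_sup_right
      obtain ⟨i, hi⟩ := ih (fun i => J i.succ)
        (fun i j hij => hcomax i.succ j.succ (by simpa [Fin.ext_iff] using hij)) hPle
      exact ⟨i.succ, hi⟩
    · have hIA : I = A := by rw [hAB, hB, ← Ideal.one_eq_top, mul_one]
      exact ⟨0, by rw [hIA]; exact le_sup_right⟩

/-- If `I` is a molecule of a domain and `J₁, …, Jₙ` are pairwise comaximal
ideals whose product is contained in `I`, then some `Jᵢ ⊆ I`. -/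
theorem stmt_10 {R : Type*} [CommRing R] [IsDomain R] (I : Ideal R)
    (hne : I ≠ ⊥) (hproper : I ≠ ⊤)
    (hmol : ∀ A B : Ideal R, I = A * B → A = ⊤ ∨ B = ⊤)
    (n : ℕ) (J : Fin n → Ideal R)
    (hcomax : ∀ i j, i ≠ j → J i ⊔ J j = ⊤)
    (hprod : (∏ i, J i) ≤ I) :
    ∃ i, J i ≤ I :=
  stmt_10_aux I hproper hmol n J hcomax hprod
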